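/- There exists an integer n₀ such that for all n ≥ n₀ the following holds: if F and G are nonempty families of subsets of [n] forming a cross-Sperner pair and |F| + |G| = 2^n − 2^⌈n/2⌉ − 2^⌊n/2⌋ + 2, then there is a set S ⊆ [n] with |S| = ⌊n/2⌋ or |S| = ⌈n/2⌉ such that one of the two families equals {S} and the other equals the family of all subsets of [n] that are neither contained in S nor contain S. -/

import Mathlib

open Finset

lemma conv_le (n a : ℕ) (ha : a ≤ n) :
    2 ^ (n / 2) + 2 ^ ((n + 1) / 2) ≤ 2 ^ a + 2 ^ (n - a) := by
  rcases le_or_gt a (n / 2) with h | h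
  · have hna : (2:ℕ) ^ (n - a) = 2 ^ ((n + 1) / 2) * 2 ^ (n / 2 - a) := by
      rw [← pow_add]; congr 1; omega
    have hn2 : (2:ℕ) ^ (n / 2) = 2 ^ a * 2 ^ (n / 2 - a) := by
      rw [← pow_add]; congr 1; omega
    rw [hna, hn2]
    have h1 : (2:ℕ) ^ a ≤ 2 ^ ((n + 1) / 2) := Nat.pow_le_pow_right (by norm_num) (by omega)
    have h2 : (1:ℕ) ≤ 2 ^ (n / 2 - a) := Nat.one_le_two_pow
    nlinarith
  · have hna : (2:ℕ) ^ a = 2 ^ ((n + 1) / 2) * 2 ^ (a - (n + 1) / 2) := by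
      rw [← pow_add]; congr 1; omega
    have hn2 : (2:ℕ) ^ (n / 2) = 2 ^ (n - a) * 2 ^ (a - (n + 1) / 2) := by
      rw [← pow_add]; congr 1; omega
    rw [hna, hn2]
    have h1 : (2:ℕ) ^ (n - a) ≤ 2 ^ ((n + 1) / 2) := Nat.pow_le_pow_right (by norm_num) (by omega)
    have h2 : (1:ℕ) ≤ 2 ^ (a - (n + 1) / 2) := Nat.one_le_two_pow
    nlinarith

lemma conv_lt (n a : ℕ) (ha : a ≤ n) (h1' : a ≠ n / 2) (h2' : a ≠ (n + 1) / 2) :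
    2 ^ (n / 2) + 2 ^ ((n + 1) / 2) < 2 ^ a + 2 ^ (n - a) := by
  rcases le_or_gt a (n / 2) with h | h
  · have hna : (2:ℕ) ^ (n - a) = 2 ^ ((n + 1) / 2) * 2 ^ (n / 2 - a) := by
      rw [← pow_add]; congr 1; omega
    have hn2 : (2:ℕ) ^ (n / 2) = 2 ^ a * 2 ^ (n / 2 - a) := by
      rw [← pow_add]; congr 1; omega
    rw [hna, hn2]
    have h1 : (2:ℕ) ^ a < 2 ^ ((n + 1) / 2) := Nat.pow_lt_pow_right (by norm_num) (by omega)
    have h2 : (2:ℕ) ≤ 2 ^ (n / 2 - a) := by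
      have : (2:ℕ) ^ 1 ≤ 2 ^ (n / 2 - a) := Nat.pow_le_pow_right (by norm_num) (by omega)
      simpa using this
    nlinarith
  · have hna : (2:ℕ) ^ a = 2 ^ ((n + 1) / 2) * 2 ^ (a - (n + 1) / 2) := by
      rw [← pow_add]; congr 1; omega
    have hn2 : (2:ℕ) ^ (n / 2) = 2 ^ (n - a) * 2 ^ (a - (n + 1) / 2) := by
      rw [← pow_add]; congr 1; omega
    rw [hna, hn2]
    have h1 : (2:ℕ) ^ (n - a) < 2 ^ ((n + 1) / 2) := Nat.pow_lt_pow_right (by norm_num) (by omega)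
    have h2 : (2:ℕ) ≤ 2 ^ (a - (n + 1) / 2) := by
      have : (2:ℕ) ^ 1 ≤ 2 ^ (a - (n + 1) / 2) := Nat.pow_le_pow_right (by norm_num) (by omega)
      simpa using this
    nlinarith

/-- `B ≤ 2^(n-1)` for `n ≥ 6`. -/
lemma B_le (n : ℕ) (hn : 6 ≤ n) :
    2 ^ (n / 2) + 2 ^ ((n + 1) / 2) ≤ 2 ^ (n - 1) := by
  have h1 : (2:ℕ) ^ (n / 2) ≤ 2 ^ (n - 2) := Nat.pow_le_pow_right (by norm_num) (by omega)
  have h2 : (2:ℕ) ^ ((n + 1) / 2) ≤ 2 ^ (n - 2) := Nat.pow_le_pow_right (by norm_num) (by omega)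
  have h3 : (2:ℕ) ^ (n - 1) = 2 ^ (n - 2) + 2 ^ (n - 2) := by
    rw [← two_mul, ← pow_succ']; congr 1; omega
  omega

/-- key numeric lemma, `≥` direction. -/
lemma num1_ge (n a b : ℕ) (hn : 12 ≤ n) (ha : 1 ≤ a) (hab : a ≤ b) (hb : b ≤ n - 1) :
    2 ^ (n / 2) + 2 ^ ((n + 1) / 2) + 2 ^ (b - a + 1) ≤ 2 ^ b + 2 ^ (n - a) + 2 := by
  rcases eq_or_lt_of_le hab with rfl | hlt
  · have h := conv_le n a (by omega)
    have e : a - a + 1 = 1 := by omega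
    rw [e]; omega
  rcases Nat.eq_or_lt_of_le ha with ha1 | ha2
  · -- a = 1
    have e : b - a + 1 = b := by omega
    rw [e]
    have h := B_le n (by omega)
    have h3 : n - a = n - 1 := by omega
    rw [h3]
    omega
  · -- 2 ≤ a < b
    have h1 : (2:ℕ) ^ (b - a + 1) ≤ 2 ^ (b - 1) := Nat.pow_le_pow_right (by norm_num) (by omega)
    have h2 : (2:ℕ) ^ (n - (b - 1)) ≤ 2 ^ (n - a) := Nat.pow_le_pow_right (by norm_num) (by omega)
    have h3 : (2:ℕ) ^ b = 2 ^ (b - 1) + 2 ^ (b - 1) := by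
      rw [← two_mul, ← pow_succ']; congr 1; omega
    have h4 := conv_le n (b - 1) (by omega)
    omega

/-- key numeric lemma, equality case. -/
lemma num1_eq (n a b : ℕ) (hn : 12 ≤ n) (ha : 1 ≤ a) (hab : a ≤ b) (hb : b ≤ n - 1)
    (heq : 2 ^ (n / 2) + 2 ^ ((n + 1) / 2) + 2 ^ (b - a + 1) = 2 ^ b + 2 ^ (n - a) + 2) :
    a = b ∧ (a = n / 2 ∨ a = (n + 1) / 2) := by
  rcases eq_or_lt_of_le hab with rfl | hlt
  · refine ⟨rfl, ?_⟩
    by_contra hcon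
    push_neg at hcon
    have h := conv_lt n a (by omega) hcon.1 hcon.2
    have e : a - a + 1 = 1 := by omega
    rw [e] at heq
    simp only [pow_one] at heq
    omega
  · exfalso
    rcases Nat.eq_or_lt_of_le ha with ha1 | ha2
    · have e : b - a + 1 = b := by omega
      rw [e] at heq
      have h := B_le n (by omega)
      have h3 : n - a = n - 1 := by omega
      rw [h3] at heq
      have h4 : (2:ℕ) ≤ 2 ^ (n-1) := by
        have : (2:ℕ) ^ 1 ≤ 2 ^ (n - 1) := Nat.pow_le_pow_right (by norm_num) (by omega)
        simpa using this
      omega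
    · have h1 : (2:ℕ) ^ (b - a + 1) ≤ 2 ^ (b - 1) := Nat.pow_le_pow_right (by norm_num) (by omega)
      have h2 : (2:ℕ) ^ (n - (b - 1)) ≤ 2 ^ (n - a) := Nat.pow_le_pow_right (by norm_num) (by omega)
      have h3 : (2:ℕ) ^ b = 2 ^ (b - 1) + 2 ^ (b - 1) := by
        rw [← two_mul, ← pow_succ']; congr 1; omega
      have h4 := conv_le n (b - 1) (by omega)
      have h5 : (1:ℕ) ≤ 2 ^ (b - 1) := Nat.one_le_two_pow
      omega

/-- Mixed Harris–Kleitman within an ambient finset `s`: a (global) lower set and an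
"upper-within-`s`" family anticorrelate. -/
lemma hk_mixed (s : Finset ℕ) (𝒜 ℬ : Finset (Finset ℕ))
    (h𝒜low : IsLowerSet (𝒜 : Set (Finset ℕ)))
    (h𝒜s : ∀ t ∈ 𝒜, t ⊆ s) (hℬs : ∀ t ∈ ℬ, t ⊆ s)
    (hℬup : ∀ t ∈ ℬ, ∀ u, t ⊆ u → u ⊆ s → u ∈ ℬ) :
    2 ^ s.card * (𝒜 ∩ ℬ).card ≤ 𝒜.card * ℬ.card := by
  classical
  set ℬ' : Finset (Finset ℕ) := s.powerset \ ℬ with hℬ'def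
  have hℬ'low : IsLowerSet (ℬ' : Set (Finset ℕ)) := by
    intro t u hut ht
    simp only [hℬ'def, coe_sdiff, coe_powerset, Set.mem_diff, Set.mem_preimage,
      Set.mem_powerset_iff, mem_coe] at ht ⊢
    refine ⟨Set.Subset.trans hut ht.1, fun hu => ht.2 ?_⟩
    exact hℬup u hu t hut (by exact_mod_cast ht.1)
  have hℬ'sub : ∀ t ∈ ℬ', t ⊆ s := fun t ht => mem_powerset.1 (mem_sdiff.1 ht).1
  have h := h𝒜low.le_card_inter_finset' hℬ'low h𝒜s hℬ'sub
  have hℬsub : ℬ ⊆ s.powerset := fun t ht => mem_powerset.2 (hℬs t ht)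
  have e2 : ℬ.card + ℬ'.card = 2 ^ s.card := by
    rw [hℬ'def, card_sdiff_of_subset hℬsub, card_powerset]
    have := card_le_card hℬsub
    rw [card_powerset] at this
    omega
  have e3 : 𝒜 ∩ ℬ' = 𝒜 \ ℬ := by
    ext t
    simp only [hℬ'def, mem_inter, mem_sdiff, mem_powerset]
    exact ⟨fun h => ⟨h.1, h.2.2⟩, fun h => ⟨h.1, h𝒜s t h.1, h.2⟩⟩
  have e4 : (𝒜 ∩ ℬ).card + (𝒜 \ ℬ).card = 𝒜.card := card_inter_add_card_sdiff 𝒜 ℬ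
  rw [e3] at h
  nlinarith [h, e2, e4]

/-- The down-closure of a family. -/
def dcl (𝓕 : Finset (Finset ℕ)) : Finset (Finset ℕ) := 𝓕.biUnion fun F => F.powerset

/-- The up-closure of a family inside `Icc 1 n`. -/
def ucl (n : ℕ) (𝓕 : Finset (Finset ℕ)) : Finset (Finset ℕ) :=
  𝓕.biUnion fun F => Finset.Icc F (Finset.Icc 1 n)

lemma mem_dcl {𝓕 : Finset (Finset ℕ)} {T : Finset ℕ} :
    T ∈ dcl 𝓕 ↔ ∃ F ∈ 𝓕, T ⊆ F := by
  simp [dcl]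

lemma mem_ucl {n : ℕ} {𝓕 : Finset (Finset ℕ)} {T : Finset ℕ} :
    T ∈ ucl n 𝓕 ↔ ∃ F ∈ 𝓕, F ⊆ T ∧ T ⊆ Finset.Icc 1 n := by
  simp [ucl, Finset.mem_Icc, and_assoc]

lemma card_Icc_one (n : ℕ) : (Finset.Icc 1 n).card = n := by
  rw [Nat.card_Icc]; omega

lemma dcl_subset_powerset {n : ℕ} {𝓕 : Finset (Finset ℕ)}
    (h : 𝓕 ⊆ (Finset.Icc 1 n).powerset) : dcl 𝓕 ⊆ (Finset.Icc 1 n).powerset := by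
  intro T hT
  obtain ⟨F, hF, hTF⟩ := mem_dcl.1 hT
  exact mem_powerset.2 (hTF.trans (mem_powerset.1 (h hF)))

lemma ucl_subset_powerset {n : ℕ} {𝓕 : Finset (Finset ℕ)} :
    ucl n 𝓕 ⊆ (Finset.Icc 1 n).powerset := by
  intro T hT
  obtain ⟨F, hF, hFT, hTA⟩ := mem_ucl.1 hT
  exact mem_powerset.2 hTA

/-- Kleitman-type bound : `2^n * #𝓕 ≤ #(dcl 𝓕) * #(ucl n 𝓕)`. -/
lemma kleitman_bound (n : ℕ) (𝓕 : Finset (Finset ℕ))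
    (h : 𝓕 ⊆ (Finset.Icc 1 n).powerset) :
    2 ^ n * 𝓕.card ≤ (dcl 𝓕).card * (ucl n 𝓕).card := by
  have hlow : IsLowerSet ((dcl 𝓕 : Finset (Finset ℕ)) : Set (Finset ℕ)) := by
    intro t u hut ht
    rw [mem_coe, mem_dcl] at ht ⊢
    obtain ⟨F, hF, htF⟩ := ht
    exact ⟨F, hF, Set.Subset.trans hut htF⟩
  have h1 : ∀ t ∈ dcl 𝓕, t ⊆ Finset.Icc 1 n := fun t ht =>
    mem_powerset.1 (dcl_subset_powerset h ht)
  have h2 : ∀ t ∈ ucl n 𝓕, t ⊆ Finset.Icc 1 n := fun t ht =>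
    mem_powerset.1 (ucl_subset_powerset ht)
  have hup : ∀ t ∈ ucl n 𝓕, ∀ u, t ⊆ u → u ⊆ Finset.Icc 1 n → u ∈ ucl n 𝓕 := by
    intro t ht u htu hu
    obtain ⟨F, hF, hFt, _⟩ := mem_ucl.1 ht
    exact mem_ucl.2 ⟨F, hF, hFt.trans htu, hu⟩
  have hsub : 𝓕 ⊆ dcl 𝓕 ∩ ucl n 𝓕 := by
    intro F hF
    refine mem_inter.2 ⟨mem_dcl.2 ⟨F, hF, le_refl _⟩, mem_ucl.2 ⟨F, hF, le_refl _, ?_⟩⟩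
    exact mem_powerset.1 (h hF)
  have hk := hk_mixed (Finset.Icc 1 n) (dcl 𝓕) (ucl n 𝓕) hlow h1 h2 hup
  rw [card_Icc_one] at hk
  calc 2 ^ n * 𝓕.card ≤ 2 ^ n * (dcl 𝓕 ∩ ucl n 𝓕).card := by
        exact Nat.mul_le_mul_left _ (card_le_card hsub)
    _ ≤ _ := hk

/-- Cross disjointness bound. -/
lemma cross_disjoint (n : ℕ) (𝓕 𝓖 : Finset (Finset ℕ))
    (h𝓕 : 𝓕 ⊆ (Finset.Icc 1 n).powerset)
    (hcross : ∀ F ∈ 𝓕, ∀ G ∈ 𝓖, ¬ F ⊆ G ∧ ¬ G ⊆ F) :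
    (dcl 𝓕).card + (ucl n 𝓖).card ≤ 2 ^ n := by
  have hd : Disjoint (dcl 𝓕) (ucl n 𝓖) := by
    rw [disjoint_left]
    intro T hT hT'
    obtain ⟨F, hF, hTF⟩ := mem_dcl.1 hT
    obtain ⟨G, hG, hGT, _⟩ := mem_ucl.1 hT'
    exact (hcross F hF G hG).2 (hGT.trans hTF)
  have hsub : dcl 𝓕 ∪ ucl n 𝓖 ⊆ (Finset.Icc 1 n).powerset :=
    union_subset (dcl_subset_powerset h𝓕) ucl_subset_powerset
  have := card_le_card hsub
  rw [card_union_of_disjoint hd, card_powerset, card_Icc_one] at this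
  exact this

lemma dcl_lb {𝓕 : Finset (Finset ℕ)} {F : Finset ℕ} (hF : F ∈ 𝓕) :
    2 ^ F.card ≤ (dcl 𝓕).card := by
  have : F.powerset ⊆ dcl 𝓕 := by
    intro T hT
    exact mem_dcl.2 ⟨F, hF, mem_powerset.1 hT⟩
  simpa [card_powerset] using card_le_card this

lemma ucl_lb {n : ℕ} {𝓕 : Finset (Finset ℕ)} {F : Finset ℕ} (hF : F ∈ 𝓕)
    (hFA : F ⊆ Finset.Icc 1 n) : 2 ^ (n - F.card) ≤ (ucl n 𝓕).card := by
  have hsub : Finset.Icc F (Finset.Icc 1 n) ⊆ ucl n 𝓕 := by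
    intro T hT
    rw [Finset.mem_Icc] at hT
    exact mem_ucl.2 ⟨F, hF, hT.1, hT.2⟩
  have := card_le_card hsub
  rwa [Finset.card_Icc_finset hFA, card_Icc_one] at this

/-- Cardinality of the family of sets incomparable to `S`. -/
lemma incomp_card (n : ℕ) (S : Finset ℕ) (hS : S ⊆ Finset.Icc 1 n) :
    ((Finset.Icc 1 n).powerset.filter (fun T => ¬ T ⊆ S ∧ ¬ S ⊆ T)).card
      + (2 ^ S.card + 2 ^ (n - S.card)) = 2 ^ n + 1 := by
  classical
  set P := (Finset.Icc 1 n).powerset with hPdef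
  have hsplit := card_filter_add_card_filter_not
    (s := P) (p := fun T => ¬ T ⊆ S ∧ ¬ S ⊆ T)
  have hPcard : P.card = 2 ^ n := by rw [hPdef, card_powerset, card_Icc_one]
  have hneg : P.filter (fun T => ¬ (¬ T ⊆ S ∧ ¬ S ⊆ T)) = P.filter (fun T => T ⊆ S ∨ S ⊆ T) := by
    apply filter_congr
    intro T _
    tauto
  have hcompeq : P.filter (fun T => T ⊆ S ∨ S ⊆ T)
      = S.powerset ∪ Finset.Icc S (Finset.Icc 1 n) := by
    ext T
    simp only [mem_filter, hPdef, mem_powerset, mem_union, Finset.mem_Icc]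
    constructor
    · rintro ⟨hTA, hTS | hST⟩
      · exact Or.inl hTS
      · exact Or.inr ⟨hST, hTA⟩
    · rintro (hTS | ⟨hST, hTA⟩)
      · exact ⟨hTS.trans hS, Or.inl hTS⟩
      · exact ⟨hTA, Or.inr hST⟩
  have hinter : S.powerset ∩ Finset.Icc S (Finset.Icc 1 n) = {S} := by
    ext T
    simp only [mem_inter, mem_powerset, Finset.mem_Icc, mem_singleton]
    constructor
    · rintro ⟨hTS, hST, _⟩
      exact Subset.antisymm hTS hST
    · rintro rfl
      exact ⟨le_refl _, le_refl _, hS⟩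
  have hcu := card_union_add_card_inter S.powerset (Finset.Icc S (Finset.Icc 1 n))
  rw [hinter, card_singleton, card_powerset, Finset.card_Icc_finset hS, card_Icc_one] at hcu
  rw [hneg, hcompeq] at hsplit
  omega

set_option maxHeartbeats 1000000 in
lemma aux_main (n : ℕ) (hn : 20 ≤ n) (𝓕 𝓖 : Finset (Finset ℕ))
    (h𝓕P : 𝓕 ⊆ (Finset.Icc 1 n).powerset) (h𝓖P : 𝓖 ⊆ (Finset.Icc 1 n).powerset)
    (h𝓕ne : 𝓕.Nonempty) (h𝓖ne : 𝓖.Nonempty)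
    (hcross : ∀ F ∈ 𝓕, ∀ G ∈ 𝓖, ¬ F ⊆ G ∧ ¬ G ⊆ F)
    (hsum : 𝓕.card + 𝓖.card + (2 ^ (n / 2) + 2 ^ ((n + 1) / 2)) = 2 ^ n + 2)
    (hX : 2 * (dcl 𝓕).card < 2 ^ n) :
    ∃ S : Finset ℕ, S ⊆ Finset.Icc 1 n ∧ (S.card = n / 2 ∨ S.card = (n + 1) / 2) ∧
      𝓕 = {S} ∧
      𝓖 = (Finset.Icc 1 n).powerset.filter (fun T => ¬ T ⊆ S ∧ ¬ S ⊆ T) := by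
  classical
  obtain ⟨F₀, hF₀, hmin⟩ := Finset.exists_min_image 𝓕 Finset.card h𝓕ne
  obtain ⟨F₁, hF₁, hmax⟩ := Finset.exists_max_image 𝓕 Finset.card h𝓕ne
  obtain ⟨G₀, hG₀⟩ := h𝓖ne
  set a := F₀.card with hadef
  set b := F₁.card with hbdef
  have hab : a ≤ b := hmin F₁ hF₁
  have ha1 : 1 ≤ a := by
    by_contra hcon
    have : F₀ = ∅ := Finset.card_eq_zero.1 (by omega)
    exact (hcross F₀ hF₀ G₀ hG₀).1 (this ▸ empty_subset G₀)
  have hF₁A : F₁ ⊆ Finset.Icc 1 n := mem_powerset.1 (h𝓕P hF₁)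
  have hbn : b ≤ n := by
    have := card_le_card hF₁A
    rwa [card_Icc_one] at this
  have hb : b ≤ n - 1 := by
    by_contra hcon
    have hbe : b = n := by omega
    have : F₁ = Finset.Icc 1 n := by
      apply Finset.eq_of_subset_of_card_le hF₁A
      rw [card_Icc_one, ← hbe]
    exact (hcross F₁ hF₁ G₀ hG₀).2 (by
      rw [this]
      exact mem_powerset.1 (h𝓖P hG₀))
  -- cardinality quantities
  have k1 := kleitman_bound n 𝓕 h𝓕P
  have k2 := kleitman_bound n 𝓖 h𝓖P
  have d1 := cross_disjoint n 𝓕 𝓖 h𝓕P hcross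
  have d2 := cross_disjoint n 𝓖 𝓕 h𝓖P
    (fun G hG F hF => ⟨(hcross F hF G hG).2, (hcross F hF G hG).1⟩)
  have lb1 : 2 ^ b ≤ (dcl 𝓕).card := dcl_lb hF₁
  have lb2 : 2 ^ (n - a) ≤ (ucl n 𝓕).card :=
    ucl_lb hF₀ (mem_powerset.1 (h𝓕P hF₀))
  -- move to ℤ
  have z1 : ((2:ℤ) ^ n) * (𝓕.card : ℤ) ≤ ((dcl 𝓕).card : ℤ) * ((ucl n 𝓕).card : ℤ) := by
    exact_mod_cast k1
  have z2 : ((2:ℤ) ^ n) * (𝓖.card : ℤ) ≤ ((dcl 𝓖).card : ℤ) * ((ucl n 𝓖).card : ℤ) := by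
    exact_mod_cast k2
  have z3 : ((dcl 𝓕).card : ℤ) + ((ucl n 𝓖).card : ℤ) ≤ (2:ℤ) ^ n := by exact_mod_cast d1
  have z4 : ((dcl 𝓖).card : ℤ) + ((ucl n 𝓕).card : ℤ) ≤ (2:ℤ) ^ n := by exact_mod_cast d2
  have zlb1 : (2 : ℤ) ^ b ≤ ((dcl 𝓕).card : ℤ) := by exact_mod_cast lb1
  have zlb2 : (2 : ℤ) ^ (n - a) ≤ ((ucl n 𝓕).card : ℤ) := by exact_mod_cast lb2
  have zsum : (𝓕.card : ℤ) + (𝓖.card : ℤ) + ((2:ℤ) ^ (n / 2) + 2 ^ ((n + 1) / 2))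
      = (2:ℤ) ^ n + 2 := by exact_mod_cast hsum
  have zX : 2 * ((dcl 𝓕).card : ℤ) < (2:ℤ) ^ n := by exact_mod_cast hX
  set l : ℤ := ((dcl 𝓕).card : ℤ) with hldef
  set u : ℤ := ((ucl n 𝓕).card : ℤ) with hudef
  set l' : ℤ := ((dcl 𝓖).card : ℤ) with hl'def
  set u' : ℤ := ((ucl n 𝓖).card : ℤ) with hu'def
  set N : ℤ := (2 : ℤ) ^ n with hNdef
  set B : ℤ := (2 : ℤ) ^ (n / 2) + 2 ^ ((n + 1) / 2) with hBdef
  have hl'0 : (0 : ℤ) ≤ l' := by positivity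
  have hu'0 : (0 : ℤ) ≤ u' := by positivity
  have hNu : (0 : ℤ) ≤ N - u := le_trans hl'0 (by linarith)
  have hNl : (0 : ℤ) ≤ N - l := le_trans hu'0 (by linarith)
  have hprod : l' * u' ≤ (N - u) * (N - l) :=
    mul_le_mul (by linarith) (by linarith) hu'0 hNu
  have hsum2 : N * (N + 2 - B) ≤ l * u + (N - u) * (N - l) := by
    have he : N * (N + 2 - B) = N * (𝓕.card : ℤ) + N * (𝓖.card : ℤ) := by
      linear_combination (-(N : ℤ)) * zsum
    linarith [z1, z2, hprod, he]
  have hXY : N * (N - 2 * B + 4) ≤ (N - 2 * l) * (N - 2 * u) := by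
    have hid : (N - 2 * l) * (N - 2 * u) = 2 * (l * u + (N - u) * (N - l)) - N ^ 2 := by ring
    have hid2 : 2 * (N * (N + 2 - B)) - N ^ 2 = N * (N - 2 * B + 4) := by ring
    linarith [hsum2, hid, hid2]
  have hBle2 : (2 : ℤ) ^ (n / 2) + 2 ^ ((n + 1) / 2) ≤ 2 ^ (n - 1) := by
    exact_mod_cast B_le n (by omega)
  have hNsplit : N = 2 ^ (n - 1) + 2 ^ (n - 1) := by
    rw [hNdef, ← two_mul, ← pow_succ']
    congr 1
    omega
  have hCpos : (0 : ℤ) < N * (N - 2 * B + 4) := by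
    have hNpos : (0 : ℤ) < N := by rw [hNdef]; positivity
    have : (0:ℤ) < N - 2 * B + 4 := by
      have h1 : (0:ℤ) < 2 ^ (n-1) := by positivity
      rw [hBdef]
      omega
    exact mul_pos hNpos this
  have hXneg : (0 : ℤ) < N - 2 * l := by linarith [zX]
  have hYneg : (0 : ℤ) < N - 2 * u := by
    by_contra hcon
    push_neg at hcon
    have h1 := mul_nonneg (le_of_lt hXneg) (by linarith : (0:ℤ) ≤ -(N - 2*u))
    have hid : (N - 2 * l) * -(N - 2 * u) = -((N - 2 * l) * (N - 2 * u)) := by ring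
    linarith [h1, hid, hXY, hCpos]
  have han : a ≤ n := le_trans hab hbn
  have hexp : (2 : ℤ) ^ b * 2 ^ (n - a) = 2 ^ n * 2 ^ (b - a) := by
    rw [← pow_add, ← pow_add]
    congr 1
    omega
  have hmono : (N - 2 * l) * (N - 2 * u) ≤ (N - 2 * 2 ^ b) * (N - 2 * 2 ^ (n - a)) :=
    mul_le_mul (by linarith) (by linarith) (le_of_lt hYneg) (by linarith)
  have hc : (N - 2 * 2 ^ b) * (N - 2 * 2 ^ (n - a))
      = N * (N - 2 * (2 ^ b + 2 ^ (n - a)) + 4 * 2 ^ (b - a)) := by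
    rw [hNdef]
    linear_combination (4 : ℤ) * hexp
  have hdiv : N - 2 * B + 4 ≤ N - 2 * (2 ^ b + 2 ^ (n - a)) + 4 * 2 ^ (b - a) := by
    have hNpos : (0 : ℤ) < N := by rw [hNdef]; positivity
    have h := le_trans hXY hmono
    rw [hc] at h
    exact le_of_mul_le_mul_left h hNpos
  have hnat : 2 ^ b + 2 ^ (n - a) + 2 ≤ 2 ^ (n / 2) + 2 ^ ((n + 1) / 2) + 2 ^ (b - a + 1) := by
    have hz : (2:ℤ) ^ b + 2 ^ (n - a) + 2 ≤ 2 ^ (n / 2) + 2 ^ ((n + 1) / 2) + 2 ^ (b - a + 1) := by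
      rw [pow_succ]
      rw [hBdef] at hdiv
      linarith
    exact_mod_cast hz
  have hge := num1_ge n a b (by omega) ha1 hab hb
  have heqn : 2 ^ (n / 2) + 2 ^ ((n + 1) / 2) + 2 ^ (b - a + 1)
      = 2 ^ b + 2 ^ (n - a) + 2 := le_antisymm hge (by omega)
  obtain ⟨haeqb, hmid⟩ := num1_eq n a b (by omega) ha1 hab hb heqn
  -- pin l = 2^b
  have hzeqn : (2:ℤ) ^ (n / 2) + 2 ^ ((n + 1) / 2) + 2 ^ (b - a + 1)
      = (2:ℤ) ^ b + 2 ^ (n - a) + 2 := by exact_mod_cast heqn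
  have hzeq : B + 2 * 2 ^ (b - a) = (2:ℤ) ^ b + 2 ^ (n - a) + 2 := by
    rw [pow_succ] at hzeqn
    rw [hBdef]
    linarith
  have hcornerC : (N - 2 * 2 ^ b) * (N - 2 * 2 ^ (n - a)) = N * (N - 2 * B + 4) := by
    rw [hc]
    linear_combination (2 : ℤ) * N * hzeq
  have hl_eq : (dcl 𝓕).card = 2 ^ b := by
    refine le_antisymm ?_ lb1
    by_contra hcon
    push_neg at hcon
    have hlz2 : (2:ℤ) ^ b + 1 ≤ l := by rw [hldef]; exact_mod_cast hcon
    have hY2 : (0:ℤ) < N - 2 * 2 ^ (n - a) := lt_of_lt_of_le hYneg (by linarith)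
    have hstep : (N - 2 * l) * (N - 2 * u) ≤ (N - 2 * 2 ^ b - 2) * (N - 2 * 2 ^ (n - a)) :=
      mul_le_mul (by linarith) (by linarith) (le_of_lt hYneg) (by linarith)
    have hid : (N - 2 * 2 ^ b - 2) * (N - 2 * 2 ^ (n - a))
        = (N - 2 * 2 ^ b) * (N - 2 * 2 ^ (n - a)) - 2 * (N - 2 * 2 ^ (n - a)) := by ring
    linarith [hXY, hstep, hcornerC, hY2, hid]
  -- now dcl 𝓕 = powerset F₁  and  𝓕 = {F₁}
  have hps : F₁.powerset ⊆ dcl 𝓕 := by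
    intro T hT
    exact mem_dcl.2 ⟨F₁, hF₁, mem_powerset.1 hT⟩
  have hdclps : F₁.powerset = dcl 𝓕 := by
    apply Finset.eq_of_subset_of_card_le hps
    rw [hl_eq, card_powerset]
  have h𝓕sing : 𝓕 = {F₁} := by
    ext F
    simp only [mem_singleton]
    constructor
    · intro hF
      have hFd : F ∈ dcl 𝓕 := mem_dcl.2 ⟨F, hF, le_refl _⟩
      rw [← hdclps, mem_powerset] at hFd
      have hcard : F₁.card ≤ F.card := by
        have := hmin F hF
        omega
      exact Finset.eq_of_subset_of_card_le hFd hcard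
    · rintro rfl
      exact hF₁
  -- 𝓖 = all sets incomparable to F₁
  have hGsub : 𝓖 ⊆ (Finset.Icc 1 n).powerset.filter (fun T => ¬ T ⊆ F₁ ∧ ¬ F₁ ⊆ T) := by
    intro G hG
    rw [mem_filter]
    exact ⟨h𝓖P hG, (hcross F₁ hF₁ G hG).2, (hcross F₁ hF₁ G hG).1⟩
  have hic := incomp_card n F₁ hF₁A
  have hBB : 2 ^ F₁.card + 2 ^ (n - F₁.card) = 2 ^ (n / 2) + 2 ^ ((n + 1) / 2) := by
    rcases hmid with hm | hm
    · have h1 : F₁.card = n / 2 := by omega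
      have h2 : n - F₁.card = (n + 1) / 2 := by omega
      rw [h2, h1]
    · have h1 : F₁.card = (n + 1) / 2 := by omega
      have h2 : n - F₁.card = n / 2 := by omega
      rw [h2, h1, add_comm]
  rw [hBB] at hic
  have hfcard : 𝓕.card = 1 := by rw [h𝓕sing, card_singleton]
  have hGcard : ((Finset.Icc 1 n).powerset.filter (fun T => ¬ T ⊆ F₁ ∧ ¬ F₁ ⊆ T)).card
      ≤ 𝓖.card := by omega
  have hGeq : 𝓖 = (Finset.Icc 1 n).powerset.filter (fun T => ¬ T ⊆ F₁ ∧ ¬ F₁ ⊆ T) :=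
    Finset.eq_of_subset_of_card_le hGsub hGcard
  refine ⟨F₁, hF₁A, ?_, h𝓕sing, hGeq⟩
  rcases hmid with hm | hm
  · exact Or.inl (by omega)
  · exact Or.inr (by omega)

/-- A pair of families `(𝓕, 𝓖)` is cross-Sperner if there is no pair
`F ∈ 𝓕`, `G ∈ 𝓖` with `F ⊆ G` or `G ⊆ F`. -/
def CrossSperner (𝓕 𝓖 : Finset (Finset ℕ)) : Prop :=
  ∀ F ∈ 𝓕, ∀ G ∈ 𝓖, ¬ F ⊆ G ∧ ¬ G ⊆ F

set_option maxHeartbeats 1000000 in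
lemma decide_side (n : ℕ) (hn : 20 ≤ n) (𝓕 𝓖 : Finset (Finset ℕ))
    (h𝓕P : 𝓕 ⊆ (Finset.Icc 1 n).powerset) (h𝓖P : 𝓖 ⊆ (Finset.Icc 1 n).powerset)
    (hcross : ∀ F ∈ 𝓕, ∀ G ∈ 𝓖, ¬ F ⊆ G ∧ ¬ G ⊆ F)
    (hsum : 𝓕.card + 𝓖.card + (2 ^ (n / 2) + 2 ^ ((n + 1) / 2)) = 2 ^ n + 2) :
    2 * (dcl 𝓕).card < 2 ^ n ∨ 2 * (dcl 𝓖).card < 2 ^ n := by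
  by_contra hcon
  push_neg at hcon
  obtain ⟨hc1, hc2⟩ := hcon
  have k1 := kleitman_bound n 𝓕 h𝓕P
  have k2 := kleitman_bound n 𝓖 h𝓖P
  have d1 := cross_disjoint n 𝓕 𝓖 h𝓕P hcross
  have d2 := cross_disjoint n 𝓖 𝓕 h𝓖P
    (fun G hG F hF => ⟨(hcross F hF G hG).2, (hcross F hF G hG).1⟩)
  have z1 : ((2:ℤ) ^ n) * (𝓕.card : ℤ) ≤ ((dcl 𝓕).card : ℤ) * ((ucl n 𝓕).card : ℤ) := by
    exact_mod_cast k1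
  have z2 : ((2:ℤ) ^ n) * (𝓖.card : ℤ) ≤ ((dcl 𝓖).card : ℤ) * ((ucl n 𝓖).card : ℤ) := by
    exact_mod_cast k2
  have z3 : ((dcl 𝓕).card : ℤ) + ((ucl n 𝓖).card : ℤ) ≤ (2:ℤ) ^ n := by exact_mod_cast d1
  have z4 : ((dcl 𝓖).card : ℤ) + ((ucl n 𝓕).card : ℤ) ≤ (2:ℤ) ^ n := by exact_mod_cast d2
  have zsum : (𝓕.card : ℤ) + (𝓖.card : ℤ) + ((2:ℤ) ^ (n / 2) + 2 ^ ((n + 1) / 2))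
      = (2:ℤ) ^ n + 2 := by exact_mod_cast hsum
  have zc1 : (2:ℤ) ^ n ≤ 2 * ((dcl 𝓕).card : ℤ) := by exact_mod_cast hc1
  have zc2 : (2:ℤ) ^ n ≤ 2 * ((dcl 𝓖).card : ℤ) := by exact_mod_cast hc2
  have hBle2 : (2 : ℤ) ^ (n / 2) + 2 ^ ((n + 1) / 2) ≤ 2 ^ (n - 1) := by
    exact_mod_cast B_le n (by omega)
  have hNsplit : (2:ℤ) ^ n = 2 ^ (n - 1) + 2 ^ (n - 1) := by
    rw [← two_mul, ← pow_succ']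
    congr 1
    omega
  set l : ℤ := ((dcl 𝓕).card : ℤ) with hldef
  set u : ℤ := ((ucl n 𝓕).card : ℤ) with hudef
  set l' : ℤ := ((dcl 𝓖).card : ℤ) with hl'def
  set u' : ℤ := ((ucl n 𝓖).card : ℤ) with hu'def
  set N : ℤ := (2 : ℤ) ^ n with hNdef
  have hl0 : (0 : ℤ) ≤ l := by positivity
  have hl'0 : (0 : ℤ) ≤ l' := by positivity
  have hm1 : l * u ≤ l * (N - l') := by
    apply mul_le_mul_of_nonneg_left (by linarith) hl0
  have hm2 : l' * u' ≤ l' * (N - l) := by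
    apply mul_le_mul_of_nonneg_left (by linarith) hl'0
  have hq : (0:ℤ) ≤ (2 * l - N) * (2 * l' - N) :=
    mul_nonneg (by linarith) (by linarith)
  have hsum2 : N * (N + 2 - ((2:ℤ) ^ (n / 2) + 2 ^ ((n + 1) / 2)))
      = N * (𝓕.card : ℤ) + N * (𝓖.card : ℤ) := by
    linear_combination (-(N : ℤ)) * zsum
  have hNpos : (0:ℤ) < N := by rw [hNdef]; positivity
  have hNN : N * N = 2 * (N * 2 ^ (n - 1)) := by linear_combination N * hNsplit
  have hNB : N * ((2:ℤ) ^ (n / 2) + 2 ^ ((n + 1) / 2)) ≤ N * 2 ^ (n - 1) :=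
    mul_le_mul_of_nonneg_left hBle2 hNpos.le
  have hq' : 2 * (N * l) + 2 * (N * l') - N * N ≤ 4 * (l * l') := by nlinarith [hq]
  have he1 : l * (N - l') = N * l - l * l' := by ring
  have he2 : l' * (N - l) = N * l' - l * l' := by ring
  have he3 : N * (N + 2 - ((2:ℤ) ^ (n / 2) + 2 ^ ((n + 1) / 2)))
      = N * N + 2 * N - N * ((2:ℤ) ^ (n / 2) + 2 ^ ((n + 1) / 2)) := by ring
  have he4 : N * ((2:ℤ) ^ (n / 2) + 2 ^ ((n + 1) / 2))
      = N * 2 ^ (n / 2) + N * 2 ^ ((n + 1) / 2) := by ring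
  linarith [z1, z2, hm1, hm2, hq', hsum2, hNB, hNN, hNpos, he1, he2, he3, he4]

theorem cross_sperner_sum_uniqueness :
    ∃ n₀ : ℕ, ∀ n : ℕ, n₀ ≤ n →
      ∀ 𝓕 𝓖 : Finset (Finset ℕ),
        𝓕 ⊆ (Finset.Icc 1 n).powerset → 𝓖 ⊆ (Finset.Icc 1 n).powerset →
        𝓕.Nonempty → 𝓖.Nonempty → CrossSperner 𝓕 𝓖 →
        𝓕.card + 𝓖.card = 2 ^ n - 2 ^ ((n + 1) / 2) - 2 ^ (n / 2) + 2 →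
        ∃ S : Finset ℕ, S ⊆ Finset.Icc 1 n ∧
          (S.card = n / 2 ∨ S.card = (n + 1) / 2) ∧
          ((𝓕 = {S} ∧
              𝓖 = (Finset.Icc 1 n).powerset.filter (fun T => ¬ T ⊆ S ∧ ¬ S ⊆ T)) ∨
           (𝓖 = {S} ∧
              𝓕 = (Finset.Icc 1 n).powerset.filter (fun T => ¬ T ⊆ S ∧ ¬ S ⊆ T))) := by
  refine ⟨20, fun n hn 𝓕 𝓖 h𝓕P h𝓖P h𝓕ne h𝓖ne hcross hsum => ?_⟩
  have hcross' : ∀ F ∈ 𝓕, ∀ G ∈ 𝓖, ¬ F ⊆ G ∧ ¬ G ⊆ F := hcross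
  have hle : 2 ^ ((n + 1) / 2) + 2 ^ (n / 2) ≤ 2 ^ n := by
    have hBle : 2 ^ (n / 2) + 2 ^ ((n + 1) / 2) ≤ 2 ^ (n - 1) := B_le n (by omega)
    have h2 : (2:ℕ) ^ (n - 1) ≤ 2 ^ n := Nat.pow_le_pow_right (by norm_num) (by omega)
    omega
  have hsum' : 𝓕.card + 𝓖.card + (2 ^ (n / 2) + 2 ^ ((n + 1) / 2)) = 2 ^ n + 2 := by
    omega
  have hcrossswap : ∀ G ∈ 𝓖, ∀ F ∈ 𝓕, ¬ G ⊆ F ∧ ¬ F ⊆ G :=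
    fun G hG F hF => ⟨(hcross' F hF G hG).2, (hcross' F hF G hG).1⟩
  rcases decide_side n hn 𝓕 𝓖 h𝓕P h𝓖P hcross' hsum' with h | h
  · obtain ⟨S, hS1, hS2, hS3, hS4⟩ :=
      aux_main n hn 𝓕 𝓖 h𝓕P h𝓖P h𝓕ne h𝓖ne hcross' hsum' h
    exact ⟨S, hS1, hS2, Or.inl ⟨hS3, hS4⟩⟩
  · obtain ⟨S, hS1, hS2, hS3, hS4⟩ :=
      aux_main n hn 𝓖 𝓕 h𝓖P h𝓕P h𝓖ne h𝓕ne hcrossswap (by omega) h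
    exact ⟨S, hS1, hS2, Or.inr ⟨hS3, hS4⟩⟩
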